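/- Let a > 1 and b ∈ (0, 1/5]. If a^4 · e^{-a^2} = b, then √(log(1/b)) ≤ a ≤ 2·√(log(1/b)). -/
import Mathlib


theorem stmt_0 (a b : ℝ) (ha : 1 < a) (hb0 : 0 < b) (hb : b ≤ 1/5)
    (h : a ^ 4 * Real.exp (-a ^ 2) = b) :
    Real.sqrt (Real.log (1 / b)) ≤ a ∧ a ≤ 2 * Real.sqrt (Real.log (1 / b)) := by
  have ha0 : 0 < a := by linarith
  have hlog2 := Real.log_two_lt_d9
  have hloga0 : 0 ≤ Real.log a := Real.log_nonneg ha.le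
  -- log b = 4 log a - a^2
  have hlb : Real.log b = 4 * Real.log a - a ^ 2 := by
    rw [← h, Real.log_mul (by positivity) (Real.exp_ne_zero _), Real.log_exp,
      Real.log_pow]
    push_cast; ring
  have hL : Real.log (1 / b) = a ^ 2 - 4 * Real.log a := by
    rw [one_div, Real.log_inv, hlb]; ring
  have hbe : b = Real.exp (4 * Real.log a - a ^ 2) := by
    rw [← hlb, Real.exp_log hb0]
  -- Step 1: a > 2
  have ha2 : 2 < a := by
    by_contra hle
    push_neg at hle
    have hx1 : 1 < a ^ 2 := by nlinarith
    have hx4 : a ^ 2 ≤ 4 := by nlinarith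
    -- concavity of log
    have hconc : (4 - a ^ 2) / 3 * Real.log 1 + (a ^ 2 - 1) / 3 * Real.log 4
        ≤ Real.log (a ^ 2) := by
      have := strictConcaveOn_log_Ioi.concaveOn.2
        (show (1:ℝ) ∈ Set.Ioi (0:ℝ) by norm_num)
        (show (4:ℝ) ∈ Set.Ioi (0:ℝ) by norm_num)
        (show (0:ℝ) ≤ (4 - a ^ 2)/3 by linarith)
        (show (0:ℝ) ≤ (a ^ 2 - 1)/3 by linarith)
        (show (4 - a ^ 2)/3 + (a ^ 2 - 1)/3 = 1 by ring)
      simp only [smul_eq_mul] at this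
      rw [show (4 - a ^ 2)/3 * 1 + (a ^ 2 - 1)/3 * 4 = a ^ 2 by ring] at this
      exact this
    have hl4 : Real.log 4 = 2 * Real.log 2 := by
      rw [show (4:ℝ) = 2 ^ 2 by norm_num, Real.log_pow]; push_cast; ring
    have hla2 : Real.log (a ^ 2) = 2 * Real.log a := by
      rw [Real.log_pow]; push_cast; ring
    rw [Real.log_one, hl4, hla2] at hconc
    have hkey : 4 * Real.log 2 - 4 ≤ 4 * Real.log a - a ^ 2 := by nlinarith
    have hb' : Real.exp (4 * Real.log 2 - 4) ≤ b := by
      rw [hbe]; exact Real.exp_le_exp.mpr hkey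
    have hexp : Real.exp (4 * Real.log 2 - 4) = 16 / Real.exp 4 := by
      rw [sub_eq_add_neg, Real.exp_add, show 4 * Real.log 2 = Real.log (2 ^ 4) by
        rw [Real.log_pow]; push_cast; ring, Real.exp_log (by norm_num), Real.exp_neg]
      norm_num [div_eq_mul_inv]
    rw [hexp] at hb'
    have he : Real.exp 4 < 80 := by
      have h1 : Real.exp 1 < 2.7182818286 := Real.exp_one_lt_d9
      have h4 : Real.exp 4 = (Real.exp 1) ^ 4 := by
        rw [← Real.exp_nat_mul]; norm_num
      have hp : (0:ℝ) < Real.exp 1 := Real.exp_pos 1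
      have h2 : Real.exp 1 ^ 2 < 7.39 := by nlinarith
      rw [h4]; nlinarith
    have hep : (0:ℝ) < Real.exp 4 := Real.exp_pos 4
    have : (1:ℝ)/5 < 16 / Real.exp 4 := by
      rw [div_lt_div_iff₀ (by norm_num) hep]; linarith
    linarith
  -- Step 2
  have hta : Real.log a ≤ Real.log 2 + (a - 2) / 2 := by
    have h1 : Real.log (a / 2) ≤ a / 2 - 1 := Real.log_le_sub_one_of_pos (by linarith)
    rw [Real.log_div (by positivity) (by norm_num)] at h1
    linarith
  constructor
  · rw [hL]
    calc Real.sqrt (a ^ 2 - 4 * Real.log a) ≤ Real.sqrt (a ^ 2) :=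
          Real.sqrt_le_sqrt (by linarith)
      _ = a := by rw [Real.sqrt_sq ha0.le]
  · have hq : (a / 2) ^ 2 ≤ Real.log (1 / b) := by
      rw [hL]; nlinarith
    have := (Real.le_sqrt' (by linarith : (0:ℝ) < a / 2)).mpr hq
    linarith
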